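/- Let X and Y be uncorrelated centered real random variables with Var[X] + Var[Y] = 1, Var[X] > 0, and let N be standard normal. Then d_K(X + Y, N) ≤ d_K(X/√Var[X], N) + 3·(Var[Y])^{1/3}. -/

import Mathlib

open MeasureTheory ProbabilityTheory
/-- Kolmogorov distance between (the laws of) two real random variables. -/
noncomputable def dK {Ω : Type*} [MeasurableSpace Ω] (μ : Measure Ω) (X Y : Ω → ℝ) : ℝ :=
  ⨆ t : ℝ, |(μ {ω | X ω ≤ t}).toReal - (μ {ω | Y ω ≤ t}).toReal|

open Real Set

namespace KolAux


noncomputable def Phi (t : ℝ) : ℝ := ((gaussianReal 0 1) (Set.Iic t)).toReal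

lemma pdf_eq (x : ℝ) : gaussianPDFReal 0 1 x = (Real.sqrt (2*π))⁻¹ * Real.exp (-x^2/2) := by
  simp [gaussianPDFReal]

lemma c2_nonneg : 0 ≤ (Real.sqrt (2*π))⁻¹ := by positivity

lemma c2_le : (Real.sqrt (2*π))⁻¹ ≤ 2/5 := by
  have h : (5/2:ℝ) ≤ Real.sqrt (2*π) := by
    rw [show (5/2:ℝ) = Real.sqrt ((5/2)^2) by rw [Real.sqrt_sq]; norm_num]
    apply Real.sqrt_le_sqrt
    nlinarith [Real.pi_gt_d6]
  calc (Real.sqrt (2*π))⁻¹ ≤ (5/2:ℝ)⁻¹ := by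
        apply inv_anti₀ (by norm_num) h
    _ ≤ 2/5 := by norm_num

lemma Phi_mono : Monotone Phi := fun a b h =>
  ENNReal.toReal_mono (measure_ne_top _ _) (measure_mono (Set.Iic_subset_Iic.2 h))

lemma Phi_split (a b : ℝ) (hab : a ≤ b) :
    Phi b = Phi a + ((gaussianReal 0 1) (Set.Ioc a b)).toReal := by
  rw [Phi, Phi, ← ENNReal.toReal_add (measure_ne_top _ _) (measure_ne_top _ _),
    ← measure_union (Set.Iic_disjoint_Ioc le_rfl) measurableSet_Ioc,
    Set.Iic_union_Ioc_eq_Iic hab]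

lemma Ioc_le (a b C : ℝ) (hab : a ≤ b) (hC0 : 0 ≤ C)
    (hC : ∀ x ∈ Set.Ioc a b, gaussianPDFReal 0 1 x ≤ C) :
    ((gaussianReal 0 1) (Set.Ioc a b)).toReal ≤ (b - a) * C := by
  rw [gaussianReal_apply 0 one_ne_zero]
  have h1 : ∫⁻ x in Set.Ioc a b, gaussianPDF 0 1 x ≤ ENNReal.ofReal C * volume (Set.Ioc a b) := by
    calc ∫⁻ x in Set.Ioc a b, gaussianPDF 0 1 x
        ≤ ∫⁻ _ in Set.Ioc a b, ENNReal.ofReal C :=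
          setLIntegral_mono measurable_const (fun x hx => ENNReal.ofReal_le_ofReal (hC x hx))
      _ = ENNReal.ofReal C * volume (Set.Ioc a b) := setLIntegral_const _ _
  rw [Real.volume_Ioc] at h1
  have h2 := ENNReal.toReal_mono (by finiteness) h1
  rw [ENNReal.toReal_mul, ENNReal.toReal_ofReal hC0, ENNReal.toReal_ofReal (by linarith)] at h2
  linarith

lemma lip (a b : ℝ) (hab : a ≤ b) : Phi b ≤ Phi a + (b - a) * (2/5) := by
  rw [Phi_split a b hab]
  have h := Ioc_le a b (2/5) hab (by norm_num) (fun x _ => by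
    rw [pdf_eq]
    calc (Real.sqrt (2*π))⁻¹ * Real.exp (-x^2/2)
        ≤ (2/5) * 1 := by
          apply mul_le_mul c2_le ?_ (Real.exp_nonneg _) (by norm_num)
          exact Real.exp_le_one_iff.2 (by nlinarith [sq_nonneg x])
      _ = 2/5 := by ring)
  linarith

lemma mul_exp_le_one (t : ℝ) (ht : 0 ≤ t) : t * Real.exp (-t^2/2) ≤ 1 := by
  have h1 : t^2/2 + 1 ≤ Real.exp (t^2/2) := Real.add_one_le_exp _
  have h2 : Real.exp (-t^2/2) = (Real.exp (t^2/2))⁻¹ := by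
    rw [← Real.exp_neg]; ring_nf
  rw [h2]
  rw [mul_inv_le_iff₀ (Real.exp_pos _)]
  nlinarith [sq_nonneg (t-1)]

lemma scale_pos (t σ : ℝ) (ht : 0 ≤ t) (h1 : 0 < σ) (h2 : σ ≤ 1) :
    Phi (t/σ) ≤ Phi t + (1-σ)/σ * (2/5) := by
  have htt : t ≤ t/σ := by
    rw [le_div_iff₀ h1]; nlinarith
  rw [Phi_split t (t/σ) htt]
  have key : ((gaussianReal 0 1) (Set.Ioc t (t/σ))).toReal
      ≤ (t/σ - t) * ((Real.sqrt (2*π))⁻¹ * Real.exp (-t^2/2)) := by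
    apply Ioc_le _ _ _ htt (by positivity)
    intro x hx
    rw [pdf_eq]
    have hx1 : t < x := hx.1
    have : x^2 ≥ t^2 := by nlinarith
    have : Real.exp (-x^2/2) ≤ Real.exp (-t^2/2) := by
      apply Real.exp_le_exp.2; linarith
    nlinarith [c2_nonneg]
  have e1 : t/σ - t = (1-σ)/σ * t := by field_simp
  have e2 := mul_exp_le_one t ht
  have e3 : 0 ≤ (1-σ)/σ := div_nonneg (by linarith) h1.le
  calc Phi t + ((gaussianReal 0 1) (Set.Ioc t (t/σ))).toReal
      ≤ Phi t + (t/σ - t) * ((Real.sqrt (2*π))⁻¹ * Real.exp (-t^2/2)) := by linarith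
    _ = Phi t + (1-σ)/σ * ((t * Real.exp (-t^2/2)) * (Real.sqrt (2*π))⁻¹) := by rw [e1]; ring
    _ ≤ Phi t + (1-σ)/σ * (1 * (2/5)) := by
        apply add_le_add_right
        apply mul_le_mul_of_nonneg_left _ e3
        apply mul_le_mul e2 c2_le c2_nonneg (by norm_num)
    _ = Phi t + (1-σ)/σ * (2/5) := by ring

lemma scale_neg (t σ : ℝ) (ht : t ≤ 0) (h1 : 0 < σ) (h2 : σ ≤ 1) :
    Phi t ≤ Phi (t/σ) + (1-σ)/σ * (2/5) := by
  have htt : t/σ ≤ t := by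
    rw [div_le_iff₀ h1]; nlinarith
  rw [Phi_split (t/σ) t htt]
  have key : ((gaussianReal 0 1) (Set.Ioc (t/σ) t)).toReal
      ≤ (t - t/σ) * ((Real.sqrt (2*π))⁻¹ * Real.exp (-t^2/2)) := by
    apply Ioc_le _ _ _ htt (by positivity)
    intro x hx
    rw [pdf_eq]
    have hx2 : x ≤ t := hx.2
    have : x^2 ≥ t^2 := by nlinarith
    have : Real.exp (-x^2/2) ≤ Real.exp (-t^2/2) := by
      apply Real.exp_le_exp.2; linarith
    nlinarith [c2_nonneg]
  have e1 : t - t/σ = (1-σ)/σ * (-t) := by field_simp; ring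
  have e2 : (-t) * Real.exp (-t^2/2) ≤ 1 := by
    have := mul_exp_le_one (-t) (by linarith)
    simpa [neg_sq] using this
  have e3 : 0 ≤ (1-σ)/σ := div_nonneg (by linarith) h1.le
  calc Phi (t/σ) + ((gaussianReal 0 1) (Set.Ioc (t/σ) t)).toReal
      ≤ Phi (t/σ) + (t - t/σ) * ((Real.sqrt (2*π))⁻¹ * Real.exp (-t^2/2)) := by linarith
    _ = Phi (t/σ) + (1-σ)/σ * (((-t) * Real.exp (-t^2/2)) * (Real.sqrt (2*π))⁻¹) := by
        rw [e1]; ring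
    _ ≤ Phi (t/σ) + (1-σ)/σ * (1 * (2/5)) := by
        apply add_le_add_right
        apply mul_le_mul_of_nonneg_left _ e3
        apply mul_le_mul e2 c2_le c2_nonneg (by norm_num)
    _ = Phi (t/σ) + (1-σ)/σ * (2/5) := by ring

lemma toReal_prob_le_one {Ω : Type*} [MeasurableSpace Ω] (μ : Measure Ω)
    [IsProbabilityMeasure μ] (A : Set Ω) : (μ A).toReal ≤ 1 := by
  have h := prob_le_one (μ := μ) (s := A)
  simpa using ENNReal.toReal_mono (by simp) h

lemma abs_prob_sub_le_one {Ω : Type*} [MeasurableSpace Ω] (μ : Measure Ω)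
    [IsProbabilityMeasure μ] (A B : Set Ω) : |(μ A).toReal - (μ B).toReal| ≤ 1 := by
  rw [abs_sub_le_iff]
  have h1 := toReal_prob_le_one μ A
  have h2 := toReal_prob_le_one μ B
  have h3 : 0 ≤ (μ A).toReal := ENNReal.toReal_nonneg
  have h4 : 0 ≤ (μ B).toReal := ENNReal.toReal_nonneg
  constructor <;> linarith


end KolAux

open KolAux in
theorem kolmogorov_uncorrelated_pair
    {Ω : Type*} [MeasurableSpace Ω] (μ : Measure Ω) [IsProbabilityMeasure μ]
    (X Y N : Ω → ℝ)
    (hX2 : MemLp X 2 μ) (hY2 : MemLp Y 2 μ)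
    (hX0 : ∫ ω, X ω ∂μ = 0) (hY0 : ∫ ω, Y ω ∂μ = 0)
    (huncorr : ∫ ω, X ω * Y ω ∂μ = 0)
    (hvar : variance X μ + variance Y μ = 1) (hXpos : 0 < variance X μ)
    (hN : Measure.map N μ = gaussianReal 0 1) :
    dK μ (fun ω => X ω + Y ω) N
      ≤ dK μ (fun ω => X ω / Real.sqrt (variance X μ)) N
        + 3 * (variance Y μ) ^ ((1 : ℝ) / 3) := by
  set v : ℝ := variance Y μ with hvdef
  set s : ℝ := variance X μ with hsdef
  set σ : ℝ := Real.sqrt s with hσdef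
  have hv0 : 0 ≤ v := variance_nonneg Y μ
  have hs1 : s ≤ 1 := by linarith
  have hσpos : 0 < σ := Real.sqrt_pos.2 hXpos
  have hσle : σ ≤ 1 := by
    rw [hσdef, show (1:ℝ) = Real.sqrt 1 by simp]
    exact Real.sqrt_le_sqrt hs1
  have hσsq : σ ^ 2 = s := Real.sq_sqrt (le_of_lt hXpos)
  -- N is a.e. measurable
  have hNmeas : AEMeasurable N μ := by
    by_contra h
    rw [Measure.map_of_not_aemeasurable h] at hN
    have h2 := congrArg (fun m : Measure ℝ => m Set.univ) hN
    simp at h2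
  have hNlaw : ∀ u : ℝ, (μ {ω | N ω ≤ u}).toReal = Phi u := by
    intro u
    have : μ {ω | N ω ≤ u} = (gaussianReal 0 1) (Set.Iic u) := by
      rw [← hN, Measure.map_apply_of_aemeasurable hNmeas measurableSet_Iic]
      rfl
    rw [Phi, this]
  -- D and its properties
  set D : ℝ := dK μ (fun ω => X ω / σ) N with hDdef
  have hDnonneg : 0 ≤ D := Real.iSup_nonneg fun t => abs_nonneg _
  have hbdd : BddAbove (Set.range fun u : ℝ =>
      |(μ {ω | X ω / σ ≤ u}).toReal - (μ {ω | N ω ≤ u}).toReal|) := by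
    refine ⟨1, ?_⟩
    rintro x ⟨u, rfl⟩
    exact abs_prob_sub_le_one μ _ _
  have hD_ge : ∀ u : ℝ, |(μ {ω | X ω / σ ≤ u}).toReal - Phi u| ≤ D := by
    intro u
    rw [← hNlaw u]
    exact le_ciSup hbdd u
  -- Chebyshev for Y
  have cheb : ∀ ε : ℝ, 0 < ε → (μ {ω | ε ≤ |Y ω|}).toReal ≤ v / ε ^ 2 := by
    intro ε hε
    have h := meas_ge_le_variance_div_sq (μ := μ) hY2 hε
    simp only [hY0, sub_zero] at h
    exact ENNReal.toReal_le_of_le_ofReal (by positivity) h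
  -- set identity for rescaling
  have hXset : ∀ u : ℝ, {ω | X ω ≤ u} = {ω | X ω / σ ≤ u / σ} := by
    intro u; ext ω
    simp only [Set.mem_setOf_eq]
    exact (div_le_div_iff_of_pos_right hσpos).symm
  -- the two inclusion bounds
  have upper : ∀ t ε : ℝ, 0 < ε →
      (μ {ω | X ω + Y ω ≤ t}).toReal ≤ (μ {ω | X ω / σ ≤ (t+ε)/σ}).toReal + v / ε ^ 2 := by
    intro t ε hε
    have hsub : {ω | X ω + Y ω ≤ t} ⊆ {ω | X ω ≤ t + ε} ∪ {ω | ε ≤ |Y ω|} := by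
      intro ω hω
      simp only [Set.mem_setOf_eq] at hω
      by_cases h : ε ≤ |Y ω|
      · exact Or.inr h
      · left
        push_neg at h
        have := neg_abs_le (Y ω)
        simp only [Set.mem_setOf_eq]
        linarith
    have h1 : μ {ω | X ω + Y ω ≤ t} ≤ μ {ω | X ω ≤ t + ε} + μ {ω | ε ≤ |Y ω|} :=
      le_trans (measure_mono hsub) (measure_union_le _ _)
    have h2 : (μ {ω | X ω + Y ω ≤ t}).toReal
        ≤ (μ {ω | X ω ≤ t + ε}).toReal + (μ {ω | ε ≤ |Y ω|}).toReal := by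
      rw [← ENNReal.toReal_add (measure_ne_top μ _) (measure_ne_top μ _)]
      exact ENNReal.toReal_mono (by finiteness) h1
    rw [hXset (t+ε)] at h2
    linarith [cheb ε hε]
  have lower : ∀ t ε : ℝ, 0 < ε →
      (μ {ω | X ω / σ ≤ (t-ε)/σ}).toReal ≤ (μ {ω | X ω + Y ω ≤ t}).toReal + v / ε ^ 2 := by
    intro t ε hε
    have hsub : {ω | X ω ≤ t - ε} ⊆ {ω | X ω + Y ω ≤ t} ∪ {ω | ε ≤ |Y ω|} := by
      intro ω hω
      simp only [Set.mem_setOf_eq] at hω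
      by_cases h : ε ≤ |Y ω|
      · exact Or.inr h
      · left
        push_neg at h
        have := le_abs_self (Y ω)
        simp only [Set.mem_setOf_eq]
        linarith
    have h1 : μ {ω | X ω ≤ t - ε} ≤ μ {ω | X ω + Y ω ≤ t} + μ {ω | ε ≤ |Y ω|} :=
      le_trans (measure_mono hsub) (measure_union_le _ _)
    have h2 : (μ {ω | X ω ≤ t - ε}).toReal
        ≤ (μ {ω | X ω + Y ω ≤ t}).toReal + (μ {ω | ε ≤ |Y ω|}).toReal := by
      rw [← ENNReal.toReal_add (measure_ne_top μ _) (measure_ne_top μ _)]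
      exact ENNReal.toReal_mono (by finiteness) h1
    rw [hXset (t-ε)] at h2
    linarith [cheb ε hε]
  -- gaussian CDF bounds
  have B_nonneg : (0:ℝ) ≤ (1-σ)/σ * (2/5) := by
    apply mul_nonneg (div_nonneg (by linarith) hσpos.le) (by norm_num)
  have gauss_up : ∀ t ε : ℝ, 0 ≤ ε →
      Phi ((t+ε)/σ) ≤ Phi t + (ε/σ) * (2/5) + (1-σ)/σ * (2/5) := by
    intro t ε hε
    have hd : (t+ε)/σ = t/σ + ε/σ := add_div t ε σ
    have h1 : Phi ((t+ε)/σ) ≤ Phi (t/σ) + (ε/σ) * (2/5) := by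
      rw [hd]
      have := lip (t/σ) (t/σ + ε/σ) (le_add_of_nonneg_right (by positivity))
      simpa using this
    rcases le_or_gt 0 t with ht | ht
    · have h2 := scale_pos t σ ht hσpos hσle
      linarith
    · have h2 : t/σ ≤ t := by
        rw [div_le_iff₀ hσpos]; nlinarith
      have h3 := Phi_mono h2
      linarith
  have gauss_down : ∀ t ε : ℝ, 0 ≤ ε →
      Phi t ≤ Phi ((t-ε)/σ) + (ε/σ) * (2/5) + (1-σ)/σ * (2/5) := by
    intro t ε hε
    have hd : t/σ = (t-ε)/σ + ε/σ := by field_simp; ring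
    have h1 : Phi (t/σ) ≤ Phi ((t-ε)/σ) + (ε/σ) * (2/5) := by
      rw [hd]
      have := lip ((t-ε)/σ) ((t-ε)/σ + ε/σ) (le_add_of_nonneg_right (by positivity))
      simpa using this
    rcases le_or_gt t 0 with ht | ht
    · have h2 := scale_neg t σ ht hσpos hσle
      linarith
    · have h2 : t ≤ t/σ := by
        rw [le_div_iff₀ hσpos]; nlinarith
      have h3 := Phi_mono h2
      linarith
  -- key per-point bound
  have key : ∀ t ε : ℝ, 0 < ε →
      |(μ {ω | X ω + Y ω ≤ t}).toReal - Phi t|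
        ≤ D + v / ε ^ 2 + (ε/σ) * (2/5) + (1-σ)/σ * (2/5) := by
    intro t ε hε
    rw [abs_sub_le_iff]
    constructor
    · have h1 := upper t ε hε
      have h2 : (μ {ω | X ω / σ ≤ (t+ε)/σ}).toReal ≤ Phi ((t+ε)/σ) + D := by
        have := hD_ge ((t+ε)/σ)
        rw [abs_sub_le_iff] at this
        linarith [this.1]
      have h3 := gauss_up t ε hε.le
      linarith
    · have h1 := lower t ε hε
      have h2 : Phi ((t-ε)/σ) ≤ (μ {ω | X ω / σ ≤ (t-ε)/σ}).toReal + D := by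
        have := hD_ge ((t-ε)/σ)
        rw [abs_sub_le_iff] at this
        linarith [this.2]
      have h3 := gauss_down t ε hε.le
      linarith
  -- conclude
  have goal_pt : ∀ t : ℝ,
      |(μ {ω | X ω + Y ω ≤ t}).toReal - (μ {ω | N ω ≤ t}).toReal|
        ≤ D + 3 * v ^ ((1:ℝ)/3) := by
    intro t
    rw [hNlaw t]
    rcases le_or_gt v (1/27) with hv27 | hv27
    · -- small variance case
      have hσ9 : (9/10 : ℝ) ≤ σ := by
        rw [hσdef]
        rw [show (9/10:ℝ) = Real.sqrt ((9/10)^2) by rw [Real.sqrt_sq]; norm_num]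
        apply Real.sqrt_le_sqrt
        nlinarith
      have hinvσ : σ⁻¹ ≤ 10/9 := by
        rw [inv_le_comm₀ hσpos (by norm_num)]
        linarith
      have h1σ : 1 - σ ≤ v := by nlinarith
      rcases eq_or_lt_of_le hv0 with h0 | hvpos
      · -- v = 0
        have hσ1 : σ = 1 := le_antisymm hσle (by linarith)
        have hbound : |(μ {ω | X ω + Y ω ≤ t}).toReal - Phi t| ≤ D := by
          apply le_of_forall_pos_le_add
          intro δ hδ
          have h := key t δ hδ
          rw [hσ1, ← h0] at h
          norm_num at h
          linarith
        have : v ^ ((1:ℝ)/3) = 0 := by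
          rw [← h0]
          exact Real.zero_rpow (by norm_num)
        rw [this]
        linarith
      · -- v > 0
        set ε : ℝ := v ^ ((1:ℝ)/3) with hεdef
        have hεpos : 0 < ε := Real.rpow_pos_of_pos hvpos _
        have h := key t ε hεpos
        have hv1 : v ≤ 1 := by linarith
        have hcomp1 : v / ε ^ 2 = ε := by
          rw [hεdef]
          rw [div_eq_iff (by positivity)]
          rw [← Real.rpow_natCast (v ^ ((1:ℝ)/3)) 2, ← Real.rpow_mul hv0,
            ← Real.rpow_add hvpos]
          norm_num
        have hcomp2 : (ε/σ) * (2/5) ≤ (4/9) * ε := by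
          rw [div_eq_mul_inv]
          have h5 : ε * σ⁻¹ ≤ ε * (10/9) := mul_le_mul_of_nonneg_left hinvσ hεpos.le
          linarith
        have hcomp3 : (1-σ)/σ * (2/5) ≤ (4/9) * ε := by
          have hvε : v ≤ ε := by
            rw [hεdef]
            calc v = v ^ ((1:ℝ)) := (Real.rpow_one v).symm
              _ ≤ v ^ ((1:ℝ)/3) := Real.rpow_le_rpow_of_exponent_ge hvpos hv1 (by norm_num)
          rw [div_eq_mul_inv]
          have h5 : (1-σ) * σ⁻¹ ≤ ε * (10/9) :=
            mul_le_mul (by linarith) hinvσ (by positivity) (by linarith)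
          linarith
        rw [hcomp1] at h
        calc |(μ {ω | X ω + Y ω ≤ t}).toReal - Phi t|
            ≤ D + ε + (ε/σ) * (2/5) + (1-σ)/σ * (2/5) := h
          _ ≤ D + ε + (4/9) * ε + (4/9) * ε := by linarith
          _ ≤ D + 3 * ε := by linarith
    · -- large variance case
      have h13 : (1/3 : ℝ) ≤ v ^ ((1:ℝ)/3) := by
        have : ((1:ℝ)/27) ^ ((1:ℝ)/3) ≤ v ^ ((1:ℝ)/3) :=
          Real.rpow_le_rpow (by norm_num) hv27.le (by norm_num)
        have he : ((1:ℝ)/27) ^ ((1:ℝ)/3) = 1/3 := by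
          rw [show (1/27:ℝ) = (1/3)^(3:ℕ) by norm_num,
            ← Real.rpow_natCast ((1:ℝ)/3) 3, ← Real.rpow_mul (by norm_num)]
          norm_num
        linarith [he ▸ this]
      have hb : |(μ {ω | X ω + Y ω ≤ t}).toReal - Phi t| ≤ 1 := by
        rw [← hNlaw t]
        exact abs_prob_sub_le_one μ _ _
      linarith
  exact ciSup_le goal_pt
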